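/- Let p be real with 1/8 ≤ p < 7/8. Then the sequence C_n(p) converges to 1/3 as n → ∞. -/
import Mathlib


open Filter

/-- Key Lyapunov inequality: with `Φ(t,u) = t(1-u)+u²`, one step of the
Fitch recursion decreases `Φ` by at least `Φ²/20` on the invariant box. -/
lemma fitch_key_ineq (u t : ℝ) (hu1 : -(1/2) ≤ u) (hu2 : u ≤ 1/2)
    (ht0 : 0 ≤ t) (ht1 : t ≤ 1) :
    ((4-u)^2*t/16) * (1 - (t - u^2)/2) + ((t - u^2)/2)^2
      ≤ (t*(1-u) + u^2) - (1/20)*(t*(1-u)+u^2)^2 := by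
  have h1 : (0:ℝ) ≤ 1/2 - u := by linarith
  have h2 : (0:ℝ) ≤ 1/2 + u := by linarith
  have h3 : (0:ℝ) ≤ 1 - t := by linarith
  nlinarith [sq_nonneg (u - t/4), sq_nonneg (2*u - t), mul_nonneg (mul_nonneg ht0 ht0) h1,
    mul_nonneg (mul_nonneg ht0 h3) (sq_nonneg u),
    mul_nonneg (mul_nonneg (sq_nonneg u) h1) h2,
    mul_nonneg (mul_nonneg (mul_nonneg ht0 (sq_nonneg u)) h1) h2,
    mul_nonneg (mul_nonneg ht0 (sq_nonneg u)) h1,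
    mul_nonneg (mul_nonneg ht0 (sq_nonneg u)) h2,
    mul_nonneg (sq_nonneg t) (sq_nonneg u), sq_nonneg (u - t/2), sq_nonneg (u - t/3)]

/-- One step of the recursion preserves the invariant region. -/
lemma fitch_step_inv (x u t : ℝ) (hx : x^2 ≤ 9/16)
    (h1 : -(1/2) ≤ u) (h2 : u ≤ 1/2) (h3 : 0 ≤ t) (h4 : t ≤ 1)
    (h5 : u < 0 → t ≤ 1/3) :
    -(1/2) ≤ (t - u^2)/2 ∧ (t - u^2)/2 ≤ 1/2 ∧ x^2*(4-u)^2*t/9 ≤ 1 ∧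
      ((t - u^2)/2 < 0 → x^2*(4-u)^2*t/9 ≤ 1/3) := by
  have hx0 : (0:ℝ) ≤ x^2 := sq_nonneg x
  refine ⟨by nlinarith, by nlinarith, ?_, ?_⟩
  · rcases le_or_gt 0 u with hu | hu
    · nlinarith [mul_nonneg hx0 h3, mul_nonneg (mul_nonneg hx0 h3) hu,
        mul_nonneg (mul_nonneg hx0 h3) (mul_nonneg hu hu),
        mul_nonneg h3 hu]
    · have ht3 := h5 hu
      nlinarith [mul_nonneg hx0 h3, mul_nonneg (mul_nonneg hx0 h3) (sq_nonneg u),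
        mul_nonneg (mul_nonneg hx0 h3) (neg_nonneg.2 hu.le)]
  · intro hneg
    have htu : t < u^2 := by nlinarith
    have hu4 : u^2 ≤ 1/4 := by nlinarith
    nlinarith [mul_nonneg hx0 h3, mul_nonneg (mul_nonneg hx0 h3) (sq_nonneg u),
      mul_nonneg hx0 (mul_nonneg h3 h3)]

/-- For 1/8 ≤ p < 7/8, C_n converges to 1/3. -/
theorem fitch_C_tendsto_third
    (p : ℝ) (C D : ℕ → ℝ)
    (hC0 : C 0 = 0) (hD0 : D 0 = 1)
    (hC : ∀ n, 2 * C (n + 1) =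
        1 - 2 * C n + 3 * (C n) ^ 2 - (2 * p - 1) ^ 2 * (D n) ^ 2)
    (hD : ∀ n, D (n + 1) = (2 * p - 1) * (1 + C n) * D n)
    (hp1 : 1 / 8 ≤ p) (hp2 : p < 7 / 8) :
    Tendsto C atTop (nhds (1 / 3)) := by
  obtain ⟨x, hx_def⟩ : ∃ x : ℝ, x = 2 * p - 1 := ⟨_, rfl⟩
  have hx2 : x^2 ≤ 9/16 := by
    have h1 : -(3/4) ≤ x := by rw [hx_def]; linarith
    have h2 : x ≤ 3/4 := by rw [hx_def]; linarith
    nlinarith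
  obtain ⟨u, hu_def⟩ : ∃ u : ℕ → ℝ, u = fun n => 1 - 3 * C n := ⟨_, rfl⟩
  obtain ⟨t, ht_def⟩ : ∃ t : ℕ → ℝ, t = fun n => 3 * x^2 * (D n)^2 := ⟨_, rfl⟩
  have hu : ∀ n, u (n+1) = (t n - (u n)^2)/2 := by
    intro n
    simp only [hu_def, ht_def, hx_def]
    linear_combination (-(3:ℝ)/2) * hC n
  have ht : ∀ n, t (n+1) = x^2 * (4 - u n)^2 * t n / 9 := by
    intro n
    simp only [hu_def, ht_def]
    rw [hD n, hx_def]; ring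
  have ht0 : ∀ n, 0 ≤ t n := by
    intro n; rw [ht_def]; positivity
  -- the invariant region, for all n ≥ 1
  have inv : ∀ n, -(1/2) ≤ u (n+1) ∧ u (n+1) ≤ 1/2 ∧ t (n+1) ≤ 1 ∧
      (u (n+1) < 0 → t (n+1) ≤ 1/3) := by
    intro n
    induction n with
    | zero =>
      have hu0 : u 0 = 1 := by rw [hu_def]; simp [hC0]
      have ht00 : t 0 = 3 * x^2 := by rw [ht_def]; simp [hD0]
      have hu1 : u 1 = (3 * x^2 - 1)/2 := by rw [hu 0, hu0, ht00]; ring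
      have ht1 : t 1 = 3 * x^2 * x^2 := by rw [ht 0, hu0, ht00]; ring
      have hx0 : (0:ℝ) ≤ x^2 := sq_nonneg x
      refine ⟨by rw [hu1]; linarith, by rw [hu1]; nlinarith, by rw [ht1]; nlinarith, ?_⟩
      intro hneg
      rw [hu1] at hneg
      have : 3 * x^2 < 1 := by linarith
      rw [ht1]; nlinarith
    | succ m ih =>
      obtain ⟨h1, h2, h3, h4⟩ := ih
      have := fitch_step_inv x (u (m+1)) (t (m+1)) hx2 h1 h2 (ht0 (m+1)) h3 h4
      rw [hu (m+1), ht (m+1)]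
      exact this
  -- Lyapunov function
  obtain ⟨ψ, hψ_def⟩ : ∃ ψ : ℕ → ℝ,
      ψ = fun k => t (k+1) * (1 - u (k+1)) + (u (k+1))^2 := ⟨_, rfl⟩
  have hψ0 : ∀ k, 0 ≤ ψ k := by
    intro k
    obtain ⟨h1, h2, h3, h4⟩ := inv k
    have := ht0 (k+1)
    simp only [hψ_def]
    nlinarith [sq_nonneg (u (k+1))]
  have hψstep : ∀ k, ψ (k+1) ≤ ψ k - (1/20) * (ψ k)^2 := by
    intro k
    obtain ⟨h1, h2, h3, h4⟩ := inv k
    obtain ⟨g1, g2, g3, g4⟩ := inv (k+1)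
    have hb : t (k+2) ≤ (4 - u (k+1))^2 * t (k+1) / 16 := by
      rw [ht (k+1)]
      nlinarith [mul_nonneg (sq_nonneg (4 - u (k+1))) (ht0 (k+1))]
    have hcoef : 0 ≤ 1 - u (k+2) := by linarith
    have key := fitch_key_ineq (u (k+1)) (t (k+1)) h1 h2 (ht0 (k+1)) h3
    simp only [hψ_def]
    calc t (k+2) * (1 - u (k+2)) + (u (k+2))^2
        ≤ ((4 - u (k+1))^2 * t (k+1) / 16) * (1 - u (k+2)) + (u (k+2))^2 := by
          nlinarith [mul_le_mul_of_nonneg_right hb hcoef]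
      _ = ((4 - u (k+1))^2 * t (k+1) / 16) * (1 - (t (k+1) - (u (k+1))^2)/2)
            + ((t (k+1) - (u (k+1))^2)/2)^2 := by rw [hu (k+1)]
      _ ≤ _ := key
  -- ψ is antitone and bounded below, hence converges to its infimum L
  have hanti : Antitone ψ := antitone_nat_of_succ_le (fun k => by
    have := hψstep k
    nlinarith [sq_nonneg (ψ k)])
  have hbdd : BddBelow (Set.range ψ) := ⟨0, by rintro y ⟨k, rfl⟩; exact hψ0 k⟩
  obtain ⟨L, hL_def⟩ : ∃ L : ℝ, L = ⨅ k, ψ k := ⟨_, rfl⟩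
  have hLtend : Tendsto ψ atTop (nhds L) := hL_def ▸ tendsto_atTop_ciInf hanti hbdd
  have hL0 : 0 ≤ L := hL_def ▸ le_ciInf hψ0
  have hL1 : Tendsto (fun k => ψ (k+1)) atTop (nhds L) :=
    hLtend.comp (tendsto_add_atTop_nat 1)
  have hL2 : Tendsto (fun k => ψ k - (1/20) * (ψ k)^2) atTop
      (nhds (L - (1/20) * L^2)) :=
    hLtend.sub (tendsto_const_nhds.mul (hLtend.pow 2))
  have hLe : L ≤ L - (1/20) * L^2 := le_of_tendsto_of_tendsto' hL1 hL2 hψstep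
  have hLzero : L = 0 := by nlinarith [sq_nonneg L]
  rw [hLzero] at hLtend
  -- hence u (k+1) → 0
  have husq : Tendsto (fun k => (u (k+1))^2) atTop (nhds 0) := by
    apply squeeze_zero (fun k => sq_nonneg _) (fun k => ?_) hLtend
    obtain ⟨h1, h2, h3, h4⟩ := inv k
    have := ht0 (k+1)
    simp only [hψ_def]
    nlinarith [mul_nonneg (ht0 (k+1)) (by linarith : (0:ℝ) ≤ 1 - u (k+1))]
  have habs : Tendsto (fun k => |u (k+1)|) atTop (nhds 0) := by
    have : Tendsto (fun k => Real.sqrt ((u (k+1))^2)) atTop (nhds (Real.sqrt 0)) :=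
      (Real.continuous_sqrt.tendsto 0).comp husq
    simpa [Real.sqrt_sq_eq_abs, Real.sqrt_zero] using this
  have hu0 : Tendsto (fun k => u (k+1)) atTop (nhds 0) := by
    have hneg : Tendsto (fun k => -|u (k+1)|) atTop (nhds 0) := by
      simpa using habs.neg
    exact tendsto_of_tendsto_of_tendsto_of_le_of_le hneg habs
      (fun k => neg_abs_le _) (fun k => le_abs_self _)
  -- conclude for C
  have hCk : Tendsto (fun k => C (k+1)) atTop (nhds (1/3)) := by
    have h : Tendsto (fun k => (1 - u (k+1))/3) atTop (nhds ((1 - 0)/3)) :=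
      (tendsto_const_nhds.sub hu0).div_const 3
    have heq : (fun k => (1 - u (k+1))/3) = fun k => C (k+1) := by
      funext k
      rw [hu_def]
      ring
    rw [heq] at h
    norm_num at h
    exact h
  exact (tendsto_add_atTop_iff_nat 1).1 hCk
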